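/- Assume that |li(x) − li_*(x)| ≤ 1.265692883423 for all real x ≥ e, and assume that li_0(x) ≤ π(x) ≤ li_1(x) for all real x ≥ e. Then |li(x) − π(x)| ≤ D̲·√(x/log x) + 1.265692883423 for all real x ≥ e, where D̲ = √(8π/κ̲)·e^(13/12)·(1 + κ̲)/(1 − κ̲); in particular |li(x) − π(x)| = O(√(x/log x)). -/

import Mathlib

/-- The Stieltjes asymptotic approximation of `li(x)`:
`li_*(x) = (x/log x)·Σ_{k=0}^{n−1} k!/(log x)^k + (log x − n)·x·n!/(log x)^(n+1)`
with `n = ⌊log x⌋`. -/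
noncomputable def liStar (x : ℝ) : ℝ :=
  x / Real.log x *
      ∑ k ∈ Finset.range ⌊Real.log x⌋₊, (Nat.factorial k : ℝ) / Real.log x ^ k
    + (Real.log x - ⌊Real.log x⌋₊) * x * (Nat.factorial ⌊Real.log x⌋₊ : ℝ)
      / Real.log x ^ (⌊Real.log x⌋₊ + 1)

/-- The truncated asymptotic approximation of `li(x)` with truncation parameter `κ`
and fractional coefficient `α`:
`li_{κ,α}(x) = (x/log x)·(α·m!/(log x)^m + Σ_{k=0}^{m−1} k!/(log x)^k)` with
`m = ⌊κ·log x⌋`. -/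
noncomputable def liApprox (κ α x : ℝ) : ℝ :=
  x / Real.log x *
    (α * (Nat.factorial ⌊κ * Real.log x⌋₊ : ℝ) / Real.log x ^ ⌊κ * Real.log x⌋₊
      + ∑ k ∈ Finset.range ⌊κ * Real.log x⌋₊, (Nat.factorial k : ℝ) / Real.log x ^ k)

/-- The logarithmic integral `li(x)`, the Cauchy principal value of `∫₀ˣ dt/log t`. -/
noncomputable def li (x : ℝ) : ℝ :=
  Filter.limUnder (nhdsWithin (0 : ℝ) (Set.Ioi 0)) fun ε =>
    (∫ t in (0 : ℝ)..(1 - ε), 1 / Real.log t) + ∫ t in (1 + ε)..x, 1 / Real.log t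


set_option maxHeartbeats 2000000

open Real Finset Nat


lemma fact_le_stir (k : ℕ) (hk : 1 ≤ k) :
    (k ! : ℝ) ≤ exp 1 * Real.sqrt k * ((k : ℝ) / exp 1) ^ k := by
  have hpos : 0 < Real.sqrt (2 * k) * ((k : ℝ) / exp 1) ^ k := by
    apply mul_pos (Real.sqrt_pos.2 (by positivity)) (pow_pos (by positivity) _)
  have hdef : (k ! : ℝ) = Stirling.stirlingSeq k * (Real.sqrt (2 * k) * ((k : ℝ) / exp 1) ^ k) := by
    rw [Stirling.stirlingSeq]
    field_simp
  have hmono : Stirling.stirlingSeq k ≤ Stirling.stirlingSeq 1 := by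
    obtain ⟨j, rfl⟩ := Nat.exists_eq_add_of_le hk
    have := Stirling.stirlingSeq'_antitone (Nat.zero_le j)
    simpa [Function.comp, Nat.succ_eq_add_one, add_comm] using this
  have h1 : Stirling.stirlingSeq 1 = exp 1 / Real.sqrt 2 := Stirling.stirlingSeq_one
  calc (k ! : ℝ) = Stirling.stirlingSeq k * (Real.sqrt (2 * k) * ((k : ℝ) / exp 1) ^ k) := hdef
    _ ≤ (exp 1 / Real.sqrt 2) * (Real.sqrt (2 * k) * ((k : ℝ) / exp 1) ^ k) := by
        apply mul_le_mul_of_nonneg_right (h1 ▸ hmono) hpos.le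
    _ = exp 1 * Real.sqrt k * ((k : ℝ) / exp 1) ^ k := by
        rw [Real.sqrt_mul (by norm_num : (0:ℝ) ≤ 2)]
        have h2 : Real.sqrt 2 ≠ 0 := by positivity
        field_simp

lemma term_le_stir (L : ℝ) (hL : 0 < L) (k : ℕ) (hk : 1 ≤ k) :
    (k ! : ℝ) / L ^ k ≤ exp 1 * Real.sqrt k * exp (-((k : ℝ) * (1 + Real.log L - Real.log k))) := by
  have hk0 : (0:ℝ) < k := by exact_mod_cast hk
  have h1 := fact_le_stir k hk
  have hLk : (0:ℝ) < L ^ k := pow_pos hL k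
  have key : ((k : ℝ) / exp 1) ^ k / L ^ k = exp (-((k : ℝ) * (1 + Real.log L - Real.log k))) := by
    rw [← div_pow]
    have hb : (0:ℝ) < (k : ℝ) / exp 1 / L := by positivity
    rw [← Real.exp_log (pow_pos hb k), Real.log_pow]
    congr 1
    rw [Real.log_div (by positivity) hL.ne', Real.log_div hk0.ne' (exp_pos 1).ne',
      Real.log_exp]
    ring
  calc (k ! : ℝ) / L ^ k ≤ exp 1 * Real.sqrt k * ((k : ℝ) / exp 1) ^ k / L ^ k := by
        apply div_le_div_of_nonneg_right h1 hLk.le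
    _ = exp 1 * Real.sqrt k * (((k : ℝ) / exp 1) ^ k / L ^ k) := by ring
    _ = _ := by rw [key]


-- chord inequality for g(κ) = κ(1 - log κ), concave
lemma chord_g {a b κ : ℝ} (ha : 0 ≤ a) (hab : a < b) (h1 : a ≤ κ) (h2 : κ ≤ b) :
    ((b - κ) * (a * (1 - Real.log a)) + (κ - a) * (b * (1 - Real.log b))) / (b - a)
      ≤ κ * (1 - Real.log κ) := by
  have hba : (0:ℝ) < b - a := by linarith
  have hs : (0:ℝ) ≤ (b - κ) / (b - a) := div_nonneg (by linarith) hba.le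
  have ht : (0:ℝ) ≤ (κ - a) / (b - a) := div_nonneg (by linarith) hba.le
  have hst : (b - κ) / (b - a) + (κ - a) / (b - a) = 1 := by field_simp; ring
  have hmem_a : a ∈ Set.Ici (0:ℝ) := ha
  have hmem_b : b ∈ Set.Ici (0:ℝ) := by simp only [Set.mem_Ici]; linarith
  have hcx := Real.convexOn_mul_log.2 hmem_a hmem_b hs ht hst
  simp only [smul_eq_mul] at hcx
  have hκeq : (b - κ) / (b - a) * a + (κ - a) / (b - a) * b = κ := by
    rw [div_mul_eq_mul_div, div_mul_eq_mul_div, ← add_div, div_eq_iff hba.ne']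
    ring
  rw [hκeq] at hcx
  have hcx' : κ * Real.log κ * (b - a) ≤ (b - κ) * (a * Real.log a) + (κ - a) * (b * Real.log b) := by
    have h := mul_le_mul_of_nonneg_right hcx hba.le
    calc κ * Real.log κ * (b - a) ≤ ((b - κ) / (b - a) * (a * Real.log a)
          + (κ - a) / (b - a) * (b * Real.log b)) * (b - a) := h
      _ = (b - κ) * (a * Real.log a) + (κ - a) * (b * Real.log b) := by
          field_simp
  rw [div_le_iff₀ hba]
  nlinarith [hcx']

-- lifted chord: for aL ≤ t ≤ bL
lemma chord_gL {a b t L : ℝ} (ha : 0 ≤ a) (hab : a < b) (hL : 0 < L) (ht : 0 < t)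
    (h1 : a * L ≤ t) (h2 : t ≤ b * L) :
    ((b * L - t) * (a * (1 - Real.log a)) + (t - a * L) * (b * (1 - Real.log b))) / (b - a)
      ≤ t * (1 + Real.log L - Real.log t) := by
  have hκ := chord_g ha hab (by rw [le_div_iff₀ hL]; linarith : a ≤ t / L)
    (by rw [div_le_iff₀ hL]; linarith : t / L ≤ b)
  have hlog : Real.log (t / L) = Real.log t - Real.log L := Real.log_div ht.ne' hL.ne'
  have hmul := mul_le_mul_of_nonneg_left hκ hL.le
  rw [hlog] at hmul
  have e1 : L * (t / L * (1 - (Real.log t - Real.log L))) = t * (1 + Real.log L - Real.log t) := by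
    rw [← mul_assoc, mul_comm L (t / L), div_mul_cancel₀ _ hL.ne']
    ring
  have e2 : L * (((b - t / L) * (a * (1 - Real.log a)) + (t / L - a) * (b * (1 - Real.log b))) / (b - a))
      = ((b * L - t) * (a * (1 - Real.log a)) + (t - a * L) * (b * (1 - Real.log b))) / (b - a) := by
    have hba : b - a ≠ 0 := by intro h; linarith [h]
    field_simp
  rw [e1, e2] at hmul
  exact hmul

lemma geom_exp_le {c : ℝ} (hc : 0 < c) (N : ℕ) :
    ∑ j ∈ range N, exp (-c) ^ j ≤ 1 + 1 / c := by
  have hr1 : exp (-c) < 1 := Real.exp_lt_one_iff.2 (by linarith)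
  have hr0 : (0:ℝ) ≤ exp (-c) := (exp_pos _).le
  have hsum : ∑ j ∈ range N, exp (-c) ^ j = (1 - exp (-c) ^ N) / (1 - exp (-c)) := by
    rw [geom_sum_eq (by linarith : exp (-c) ≠ 1)]
    rw [div_eq_div_iff (by linarith) (by linarith)]
    ring
  rw [hsum]
  have hpow : (0:ℝ) ≤ exp (-c) ^ N := pow_nonneg hr0 N
  have h1 : (1 - exp (-c) ^ N) / (1 - exp (-c)) ≤ 1 / (1 - exp (-c)) := by
    apply div_le_div_of_nonneg_right (by linarith) (by linarith)
  refine h1.trans ?_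
  have hc1 : (0:ℝ) < 1 + c := by linarith
  have hec : exp (-c) * (1 + c) ≤ 1 := by
    calc exp (-c) * (1 + c) ≤ exp (-c) * exp c := by
          apply mul_le_mul_of_nonneg_left _ hr0
          linarith [Real.add_one_le_exp c]
      _ = 1 := by rw [← Real.exp_add]; simp
  have h2 : c / (1 + c) ≤ 1 - exp (-c) := by
    rw [div_le_iff₀ hc1]
    nlinarith [hec]
  rw [div_le_iff₀ (by linarith)]
  calc (1:ℝ) = (1 + 1/c) * (c / (1 + c)) := by field_simp; ring
    _ ≤ (1 + 1/c) * (1 - exp (-c)) := by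
        apply mul_le_mul_of_nonneg_left h2
        positivity


lemma log_eq_of_sol {κ : ℝ} (hκ : 0 < κ) (hsol : κ * (1 - Real.log κ) = 1 / 2) :
    Real.log κ = 1 - 1 / (2 * κ) := by
  field_simp
  linear_combination (-2 : ℝ) * hsol

lemma kl_ub {κ : ℝ} (hκ0 : 0 < κ) (hκ1 : κ < 1) (hsol : κ * (1 - Real.log κ) = 1 / 2) :
    κ ≤ 0.293 := by
  have hlog := log_eq_of_sol hκ0 hsol
  have h := Real.log_le_sub_one_of_pos hκ0
  rw [hlog] at h
  -- 1 - 1/(2κ) ≤ κ - 1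
  have h2 : 0 ≤ 2 * κ ^ 2 - 4 * κ + 1 := by
    have h4 := mul_le_mul_of_nonneg_right h (by positivity : (0:ℝ) ≤ 2 * κ)
    have h5 : (1 - 1 / (2 * κ)) * (2 * κ) = 2 * κ - 1 := by field_simp
    nlinarith [h4, h5]
  by_contra hcon
  push_neg at hcon
  nlinarith [mul_pos (by linarith : (0:ℝ) < κ - 0.293) (by linarith : (0:ℝ) < 1 - κ)]

lemma kl_lb {κ : ℝ} (hκ0 : 0 < κ) (hκ1 : κ < 1) (hsol : κ * (1 - Real.log κ) = 1 / 2) :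
    0.1823 ≤ κ := by
  have hlog := log_eq_of_sol hκ0 hsol
  set t : ℝ := 1 / κ with ht_def
  have ht : 0 < t := by positivity
  have htκ : t * κ = 1 := by rw [ht_def]; field_simp
  have he : (2.7182818283:ℝ) < exp 1 := Real.exp_one_gt_d9
  set e2 : ℝ := exp 1 * exp 1 with he2_def
  have he2 : (7.389056:ℝ) ≤ e2 := by nlinarith [he, (Real.exp_pos 1).le]
  have he2pos : (0:ℝ) < e2 := by positivity
  have hupos : (0:ℝ) < 1 / (κ * e2) := by positivity
  have h := Real.log_le_sub_one_of_pos hupos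
  have hlogu : Real.log (1 / (κ * e2)) = -Real.log κ - 2 := by
    rw [one_div, Real.log_inv, Real.log_mul hκ0.ne' he2pos.ne', he2_def,
      Real.log_mul (exp_pos 1).ne' (exp_pos 1).ne', Real.log_exp]
    ring
  rw [hlogu, hlog] at h
  -- h : -(1 - 1/(2κ)) - 2 ≤ 1/(κ e2) - 1
  have hu_eq : 1 / (κ * e2) = t * (1 / e2) := by
    rw [ht_def]; field_simp
  have h12κ : 1 / (2 * κ) = t / 2 := by rw [ht_def]; field_simp
  rw [hu_eq, h12κ] at h
  -- h : -(1 - t/2) - 2 ≤ t * (1/e2) - 1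
  have hinv : 1 / e2 ≤ 0.1353356 := by
    rw [div_le_iff₀ he2pos]; nlinarith
  have h7 : t * (1 / e2) ≤ t * 0.1353356 := mul_le_mul_of_nonneg_left hinv ht.le
  have ht_ub : t ≤ 5.4845 := by nlinarith
  nlinarith [mul_le_mul_of_nonneg_left ht_ub hκ0.le, htκ]

lemma ku_ub {κ : ℝ} (hκ1 : 1 < κ) (hsol : κ * (1 - Real.log κ) = 1 / 2) :
    κ ≤ 2.29745 := by
  have hκ0 : (0:ℝ) < κ := by linarith
  have hlog := log_eq_of_sol hκ0 hsol
  set s : ℝ := exp (1/2 : ℝ) with hs_def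
  have hs2 : s * s = exp 1 := by rw [hs_def, ← Real.exp_add]; norm_num
  have hsle : s ≤ 1.6487213 := by
    nlinarith [Real.exp_one_lt_d9, (Real.exp_pos (1/2 : ℝ)).le, hs2]
  have hspos : 0 < s := Real.exp_pos _
  have h := Real.log_le_sub_one_of_pos (by positivity : (0:ℝ) < s / κ)
  have hlogsk : Real.log (s / κ) = 1/2 - Real.log κ := by
    rw [Real.log_div hspos.ne' hκ0.ne', hs_def, Real.log_exp]
  rw [hlogsk, hlog] at h
  -- h : 1/2 - (1 - 1/(2κ)) ≤ s/κ - 1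
  have hmul := mul_le_mul_of_nonneg_right h (by positivity : (0:ℝ) ≤ 2 * κ)
  have e1 : (1/2 - (1 - 1 / (2 * κ))) * (2 * κ) = 1 - κ := by field_simp; ring
  have e2 : (s / κ - 1) * (2 * κ) = 2 * s - 2 * κ := by field_simp
  rw [e1, e2] at hmul
  linarith

lemma sum_bound {κℓ κᵤ L : ℝ} (hκℓ0 : 0 < κℓ) (hκℓ1 : κℓ < 1) (hκᵤ1 : 1 < κᵤ)
    (hsolℓ : κℓ * (1 - Real.log κℓ) = 1 / 2) (hsolᵤ : κᵤ * (1 - Real.log κᵤ) = 1 / 2)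
    (hL : 1 ≤ L) :
    ∑ k ∈ Finset.Icc ⌊κℓ * L⌋₊ ⌊κᵤ * L⌋₊, (k ! : ℝ) / L ^ k
      ≤ 37.1 * Real.sqrt L * exp (-(L / 2)) := by
  have hκℓlb := kl_lb hκℓ0 hκℓ1 hsolℓ
  have hκℓub := kl_ub hκℓ0 hκℓ1 hsolℓ
  have hκᵤub := ku_ub hκᵤ1 hsolᵤ
  have hlogℓ := log_eq_of_sol hκℓ0 hsolℓ
  have hL0 : (0:ℝ) < L := by linarith
  have heub : exp 1 ≤ 2.7182818286 := Real.exp_one_lt_d9.le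
  have he0 : (0:ℝ) < exp 1 := exp_pos 1
  have hsL : (1:ℝ) ≤ Real.sqrt L := Real.one_le_sqrt.2 hL
  have hsL0 : (0:ℝ) ≤ Real.sqrt L := Real.sqrt_nonneg L
  have hexp0 : (0:ℝ) < exp (-(L/2)) := exp_pos _
  set m₀ := ⌊κℓ * L⌋₊ with hm₀_def
  set n := ⌊L⌋₊ with hn_def
  set m₁ := ⌊κᵤ * L⌋₊ with hm₁_def
  have hm₀n : m₀ ≤ n := Nat.floor_le_floor (by nlinarith)
  have hnm₁ : n ≤ m₁ := Nat.floor_le_floor (by nlinarith)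
  have hm₀_le : (m₀ : ℝ) ≤ κℓ * L := Nat.floor_le (by positivity)
  have hm₀_gt : κℓ * L < m₀ + 1 := Nat.lt_floor_add_one _
  have hn_le : (n : ℝ) ≤ L := Nat.floor_le hL0.le
  have hn_gt : L < n + 1 := Nat.lt_floor_add_one _
  have hm₁_le : (m₁ : ℝ) ≤ κᵤ * L := Nat.floor_le (by positivity)
  -- Piece 1
  have piece1 : (m₀ ! : ℝ) / L ^ m₀ ≤ 15 * Real.sqrt L * exp (-(L/2)) := by
    rcases Nat.eq_zero_or_pos m₀ with h0 | hpos
    · rw [h0]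
      norm_num
      have hLlt : κℓ * L < 1 := by
        have h1 : (m₀ : ℝ) + 1 = 1 := by rw [h0]; norm_num
        linarith [hm₀_gt, h1]
      have hexple : exp (L/2) ≤ exp 1 / κℓ := by
        have h1 : L / 2 ≤ 1 / (2 * κℓ) := by
          rw [div_le_div_iff₀ (by norm_num) (by positivity)]
          nlinarith
        calc exp (L/2) ≤ exp (1/(2*κℓ)) := Real.exp_le_exp.2 h1
          _ = exp (1 - Real.log κℓ) := by rw [hlogℓ]; ring_nf
          _ = exp 1 / κℓ := by rw [Real.exp_sub, Real.exp_log hκℓ0]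
      have h15 : exp 1 / κℓ ≤ 15 := by
        rw [div_le_iff₀ hκℓ0]; nlinarith
      have key : exp (L/2) ≤ 15 * Real.sqrt L := by
        calc exp (L/2) ≤ 15 := hexple.trans h15
          _ ≤ 15 * Real.sqrt L := by nlinarith
      calc (1 : ℝ) = exp (L/2) * exp (-(L/2)) := by rw [← Real.exp_add]; simp
        _ ≤ 15 * Real.sqrt L * exp (-(L/2)) := mul_le_mul_of_nonneg_right key hexp0.le
    · have hm₀1 : (1:ℝ) ≤ (m₀ : ℝ) := by exact_mod_cast hpos
      have hm₀0 : (0:ℝ) < (m₀ : ℝ) := by linarith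
      have hT := term_le_stir L hL0 m₀ hpos
      have haL : κℓ * L ≤ L := by nlinarith
      have hbL : (m₀ : ℝ) ≤ L := le_trans hm₀_le haL
      have ha0 : (0:ℝ) < κℓ * L := by positivity
      have hφ : L / 2 - (Real.log L - Real.log m₀) ≤ (m₀:ℝ) * (1 + Real.log L - Real.log m₀) := by
        have hφa : (κℓ * L) * (1 + Real.log L - Real.log (κℓ * L)) = L / 2 := by
          rw [Real.log_mul hκℓ0.ne' hL0.ne']
          have e : (κℓ * L) * (1 + Real.log L - (Real.log κℓ + Real.log L))
              = L * (κℓ * (1 - Real.log κℓ)) := by ring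
          rw [e, hsolℓ]; ring
        have hkey : (κℓ * L) * (1 + Real.log L - Real.log (κℓ * L))
            - (m₀:ℝ) * (1 + Real.log L - Real.log m₀)
            ≤ ((κℓ * L) - m₀) * (Real.log L - Real.log m₀) := by
          have h1 := Real.log_le_sub_one_of_pos (show (0:ℝ) < (m₀:ℝ) / (κℓ * L) by positivity)
          rw [Real.log_div hm₀0.ne' ha0.ne'] at h1
          have h2 := mul_le_mul_of_nonneg_left h1 ha0.le
          have h3 : (κℓ * L) * ((m₀:ℝ) / (κℓ * L) - 1) = (m₀:ℝ) - κℓ * L := by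
            field_simp
          rw [h3] at h2
          nlinarith [h2]
        have hmono : Real.log (m₀:ℝ) ≤ Real.log L := Real.log_le_log hm₀0 hbL
        have hsub1 : (κℓ * L) - (m₀:ℝ) ≤ 1 := by linarith
        have h4 : ((κℓ * L) - m₀) * (Real.log L - Real.log m₀) ≤ Real.log L - Real.log m₀ := by
          nlinarith [mul_le_mul_of_nonneg_right hsub1 (by linarith : (0:ℝ) ≤ Real.log L - Real.log m₀)]
        linarith [hφa, hkey, h4]
      have hcl : κℓ * L ≤ 2 * m₀ := by
        rcases le_or_gt (κℓ * L) 2 with h | h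
        · linarith
        · linarith
      have hexpφ : exp (-((m₀:ℝ) * (1 + Real.log L - Real.log m₀)))
          ≤ exp (-(L/2)) * (L / m₀) := by
        have e : exp (-(L/2)) * (L / m₀) = exp (-(L/2) + (Real.log L - Real.log m₀)) := by
          rw [Real.exp_add]
          congr 1
          rw [← Real.log_div hL0.ne' hm₀0.ne', Real.exp_log (by positivity)]
        rw [e]
        exact Real.exp_le_exp.2 (by linarith)
      have hs1 : Real.sqrt (κℓ/2) * Real.sqrt L ≤ Real.sqrt m₀ := by
        rw [← Real.sqrt_mul (by positivity)]
        apply Real.sqrt_le_sqrt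
        nlinarith
      have hs1' : (0:ℝ) < Real.sqrt (κℓ/2) * Real.sqrt L :=
        mul_pos (Real.sqrt_pos.2 (by positivity)) (Real.sqrt_pos.2 hL0)
      have hdiv : L / Real.sqrt m₀ ≤ Real.sqrt L * 3.3124 := by
        have h5 : L / Real.sqrt m₀ ≤ L / (Real.sqrt (κℓ/2) * Real.sqrt L) :=
          div_le_div_of_nonneg_left hL0.le hs1' hs1
        have h6 : L / (Real.sqrt (κℓ/2) * Real.sqrt L) = Real.sqrt L / Real.sqrt (κℓ/2) := by
          rw [mul_comm, ← div_div, Real.div_sqrt]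
        have h7 : Real.sqrt L / Real.sqrt (κℓ/2) ≤ Real.sqrt L * 3.3124 := by
          rw [div_le_iff₀ (Real.sqrt_pos.2 (by positivity))]
          have h8 : (0.3019:ℝ) ≤ Real.sqrt (κℓ/2) := by
            rw [show (0.3019:ℝ) = Real.sqrt (0.3019^2) by
              rw [Real.sqrt_sq (by norm_num)]]
            apply Real.sqrt_le_sqrt
            norm_num
            linarith
          nlinarith
        linarith [h5, h6 ▸ h5, h7]
      have hsm₀ : (0:ℝ) < Real.sqrt m₀ := Real.sqrt_pos.2 hm₀0
      have hmulsqrt : Real.sqrt (m₀:ℝ) * (L / m₀) = L / Real.sqrt m₀ := by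
        rw [eq_div_iff hsm₀.ne']
        rw [mul_comm (Real.sqrt (m₀:ℝ)) (L / m₀), mul_assoc, Real.mul_self_sqrt hm₀0.le]
        field_simp
      calc (m₀ ! : ℝ) / L ^ m₀
          ≤ exp 1 * Real.sqrt m₀ * exp (-((m₀:ℝ) * (1 + Real.log L - Real.log m₀))) := hT
        _ ≤ exp 1 * Real.sqrt m₀ * (exp (-(L/2)) * (L / m₀)) := by
            apply mul_le_mul_of_nonneg_left hexpφ (by positivity)
        _ = exp 1 * (Real.sqrt (m₀:ℝ) * (L / m₀)) * exp (-(L/2)) := by ring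
        _ = exp 1 * (L / Real.sqrt m₀) * exp (-(L/2)) := by rw [hmulsqrt]
        _ ≤ exp 1 * (Real.sqrt L * 3.3124) * exp (-(L/2)) := by
            apply mul_le_mul_of_nonneg_right _ hexp0.le
            apply mul_le_mul_of_nonneg_left hdiv he0.le
        _ ≤ 15 * Real.sqrt L * exp (-(L/2)) := by
            apply mul_le_mul_of_nonneg_right _ hexp0.le
            nlinarith
    done
  -- Piece 2: k ∈ [m₀+1, n]
  have piece2 : ∑ k ∈ Ico (m₀+1) (n+1), (k ! : ℝ) / L ^ k
      ≤ 7.2 * Real.sqrt L * exp (-(L/2)) := by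
    set c : ℝ := 1 / (2 * (1 - κℓ)) with hc_def
    have hc0 : 0 < c := by
      rw [hc_def]
      apply _root_.div_pos one_pos
      linarith
    have hterm : ∀ k ∈ Ico (m₀+1) (n+1), (k ! : ℝ) / L ^ k
        ≤ (exp 1 * Real.sqrt L * exp (-(L/2))) * exp (-c) ^ (k - (m₀+1)) := by
      intro k hk
      rw [Finset.mem_Ico] at hk
      obtain ⟨hk1, hk2⟩ := hk
      have hk1' : (1:ℕ) ≤ k := le_trans (Nat.le_add_left 1 m₀) hk1
      have hkr0 : (0:ℝ) < (k:ℝ) := by exact_mod_cast hk1'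
      have hkm₀ : ((m₀:ℝ) + 1) ≤ (k:ℝ) := by exact_mod_cast hk1
      have hkκ : κℓ * L ≤ (k:ℝ) := le_trans hm₀_gt.le hkm₀
      have hkn : (k:ℝ) ≤ (n:ℝ) := by exact_mod_cast Nat.lt_succ_iff.1 hk2
      have hkL : (k:ℝ) ≤ 1 * L := by rw [one_mul]; linarith
      have hchord := chord_gL hκℓ0.le hκℓ1 hL0 hkr0 hkκ hkL
      have hsimp : ((1 * L - (k:ℝ)) * (κℓ * (1 - Real.log κℓ))
          + ((k:ℝ) - κℓ * L) * (1 * (1 - Real.log 1))) / (1 - κℓ)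
          = L / 2 + ((k:ℝ) - κℓ * L) * c := by
        rw [hsolℓ, Real.log_one, hc_def]
        have h9 : (1:ℝ) - κℓ ≠ 0 := by linarith
        field_simp
        ring
      rw [hsimp] at hchord
      have hexp1 : exp (-((k:ℝ) * (1 + Real.log L - Real.log k)))
          ≤ exp (-(L/2)) * exp (-c) ^ (k - (m₀+1)) := by
        rw [← Real.exp_nat_mul, ← Real.exp_add]
        apply Real.exp_le_exp.2
        have hcast : ((k - (m₀+1) : ℕ) : ℝ) = (k:ℝ) - ((m₀:ℝ) + 1) := by
          rw [Nat.cast_sub hk1]; push_cast; ring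
        rw [hcast]
        have hmono : ((k:ℝ) - ((m₀:ℝ)+1)) * c ≤ ((k:ℝ) - κℓ * L) * c := by
          apply mul_le_mul_of_nonneg_right _ hc0.le
          linarith
        nlinarith [hchord, hmono]
      have hsk : Real.sqrt (k:ℝ) ≤ Real.sqrt L := Real.sqrt_le_sqrt (by linarith)
      calc (k ! : ℝ) / L ^ k
          ≤ exp 1 * Real.sqrt k * exp (-((k:ℝ) * (1 + Real.log L - Real.log k))) :=
            term_le_stir L hL0 k hk1'
        _ ≤ exp 1 * Real.sqrt L * (exp (-(L/2)) * exp (-c) ^ (k - (m₀+1))) := by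
            apply mul_le_mul (mul_le_mul_of_nonneg_left hsk he0.le) hexp1 (exp_pos _).le
            positivity
        _ = (exp 1 * Real.sqrt L * exp (-(L/2))) * exp (-c) ^ (k - (m₀+1)) := by ring
    have hsum1 : ∑ k ∈ Ico (m₀+1) (n+1), (k ! : ℝ) / L ^ k
        ≤ (exp 1 * Real.sqrt L * exp (-(L/2))) * ∑ k ∈ Ico (m₀+1) (n+1), exp (-c) ^ (k - (m₀+1)) := by
      rw [Finset.mul_sum]
      exact Finset.sum_le_sum hterm
    have hgeo : ∑ k ∈ Ico (m₀+1) (n+1), exp (-c) ^ (k - (m₀+1)) ≤ 1 + 1 / c := by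
      rw [Finset.sum_Ico_eq_sum_range]
      have : ∀ j ∈ range (n + 1 - (m₀ + 1)), exp (-c) ^ (m₀ + 1 + j - (m₀ + 1)) = exp (-c) ^ j := by
        intro j hj; congr 1; omega
      rw [Finset.sum_congr rfl this]
      exact geom_exp_le hc0 _
    have hcval : 1 + 1 / c ≤ 2.636 := by
      rw [hc_def, one_div_one_div]
      linarith
    have hfac : (0:ℝ) ≤ Real.sqrt L * exp (-(L/2)) := by positivity
    calc ∑ k ∈ Ico (m₀+1) (n+1), (k ! : ℝ) / L ^ k
        ≤ (exp 1 * Real.sqrt L * exp (-(L/2))) * (1 + 1/c) :=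
          hsum1.trans (mul_le_mul_of_nonneg_left hgeo (by positivity))
      _ = (exp 1 * (1 + 1/c)) * (Real.sqrt L * exp (-(L/2))) := by ring
      _ ≤ 7.2 * (Real.sqrt L * exp (-(L/2))) := by
          apply mul_le_mul_of_nonneg_right _ hfac
          have h20 : (0:ℝ) ≤ 1 + 1/c := by positivity
          nlinarith [mul_le_mul heub hcval h20 (by norm_num : (0:ℝ) ≤ 2.7182818286)]
      _ = 7.2 * Real.sqrt L * exp (-(L/2)) := by ring
  -- Piece 3: k ∈ [n+1, m₁]
  have piece3 : ∑ k ∈ Ico (n+1) (m₁+1), (k ! : ℝ) / L ^ k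
      ≤ 14.9 * Real.sqrt L * exp (-(L/2)) := by
    set c : ℝ := 1 / (2 * (κᵤ - 1)) with hc_def
    have hc0 : 0 < c := by
      rw [hc_def]
      apply _root_.div_pos one_pos
      linarith
    have hterm : ∀ k ∈ Ico (n+1) (m₁+1), (k ! : ℝ) / L ^ k
        ≤ (exp 1 * (1.51576 * Real.sqrt L) * exp (-(L/2))) * exp (-c) ^ (m₁ - k) := by
      intro k hk
      rw [Finset.mem_Ico] at hk
      obtain ⟨hk1, hk2⟩ := hk
      have hk2' : k ≤ m₁ := Nat.lt_succ_iff.1 hk2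
      have hk1' : (1:ℕ) ≤ k := le_trans (Nat.le_add_left 1 n) hk1
      have hkr0 : (0:ℝ) < (k:ℝ) := by exact_mod_cast hk1'
      have hkn : ((n:ℝ) + 1) ≤ (k:ℝ) := by exact_mod_cast hk1
      have hkL : 1 * L ≤ (k:ℝ) := by rw [one_mul]; linarith
      have hkm₁ : (k:ℝ) ≤ (m₁:ℝ) := by exact_mod_cast hk2'
      have hkκ : (k:ℝ) ≤ κᵤ * L := le_trans hkm₁ hm₁_le
      have hchord := chord_gL (le_of_lt one_pos) hκᵤ1 hL0 hkr0 hkL hkκ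
      have hsimp : ((κᵤ * L - (k:ℝ)) * (1 * (1 - Real.log 1))
          + ((k:ℝ) - 1 * L) * (κᵤ * (1 - Real.log κᵤ))) / (κᵤ - 1)
          = L / 2 + (κᵤ * L - (k:ℝ)) * c := by
        rw [hsolᵤ, Real.log_one, hc_def]
        have h9 : κᵤ - 1 ≠ 0 := by linarith
        field_simp
        ring
      rw [hsimp] at hchord
      have hexp1 : exp (-((k:ℝ) * (1 + Real.log L - Real.log k)))
          ≤ exp (-(L/2)) * exp (-c) ^ (m₁ - k) := by
        rw [← Real.exp_nat_mul, ← Real.exp_add]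
        apply Real.exp_le_exp.2
        have hcast : ((m₁ - k : ℕ) : ℝ) = (m₁:ℝ) - (k:ℝ) := by
          rw [Nat.cast_sub hk2']
        rw [hcast]
        have hmono : ((m₁:ℝ) - (k:ℝ)) * c ≤ (κᵤ * L - (k:ℝ)) * c := by
          apply mul_le_mul_of_nonneg_right _ hc0.le
          linarith
        nlinarith [hchord, hmono]
      have hsk : Real.sqrt (k:ℝ) ≤ 1.51576 * Real.sqrt L := by
        have h10 : Real.sqrt (k:ℝ) ≤ Real.sqrt (κᵤ * L) := Real.sqrt_le_sqrt hkκ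
        have h11 : Real.sqrt (κᵤ * L) = Real.sqrt κᵤ * Real.sqrt L :=
          Real.sqrt_mul (by linarith) L
        have h12 : Real.sqrt κᵤ ≤ 1.51576 := by
          rw [Real.sqrt_le_iff]
          constructor
          · norm_num
          · nlinarith
        rw [h11] at h10
        calc Real.sqrt (k:ℝ) ≤ Real.sqrt κᵤ * Real.sqrt L := h10
          _ ≤ 1.51576 * Real.sqrt L := mul_le_mul_of_nonneg_right h12 hsL0
      calc (k ! : ℝ) / L ^ k
          ≤ exp 1 * Real.sqrt k * exp (-((k:ℝ) * (1 + Real.log L - Real.log k))) :=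
            term_le_stir L hL0 k hk1'
        _ ≤ exp 1 * (1.51576 * Real.sqrt L) * (exp (-(L/2)) * exp (-c) ^ (m₁ - k)) := by
            apply mul_le_mul (mul_le_mul_of_nonneg_left hsk he0.le) hexp1 (exp_pos _).le
            positivity
        _ = (exp 1 * (1.51576 * Real.sqrt L) * exp (-(L/2))) * exp (-c) ^ (m₁ - k) := by ring
    have hsum1 : ∑ k ∈ Ico (n+1) (m₁+1), (k ! : ℝ) / L ^ k
        ≤ (exp 1 * (1.51576 * Real.sqrt L) * exp (-(L/2)))
          * ∑ k ∈ Ico (n+1) (m₁+1), exp (-c) ^ (m₁ - k) := by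
      rw [Finset.mul_sum]
      exact Finset.sum_le_sum hterm
    have hgeo : ∑ k ∈ Ico (n+1) (m₁+1), exp (-c) ^ (m₁ - k) ≤ 1 + 1 / c := by
      rw [Finset.sum_Ico_eq_sum_range]
      have he : ∀ j ∈ range (m₁ + 1 - (n + 1)), exp (-c) ^ (m₁ - (n + 1 + j))
          = exp (-c) ^ (m₁ + 1 - (n + 1) - 1 - j) := by
        intro j hj; congr 1; omega
      rw [Finset.sum_congr rfl he, Finset.sum_range_reflect (fun j => exp (-c) ^ j)]
      exact geom_exp_le hc0 _
    have hcval : 1 + 1 / c ≤ 3.595 := by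
      rw [hc_def, one_div_one_div]
      linarith
    have hfac : (0:ℝ) ≤ Real.sqrt L * exp (-(L/2)) := by positivity
    calc ∑ k ∈ Ico (n+1) (m₁+1), (k ! : ℝ) / L ^ k
        ≤ (exp 1 * (1.51576 * Real.sqrt L) * exp (-(L/2))) * (1 + 1/c) :=
          hsum1.trans (mul_le_mul_of_nonneg_left hgeo (by positivity))
      _ = (exp 1 * 1.51576 * (1 + 1/c)) * (Real.sqrt L * exp (-(L/2))) := by ring
      _ ≤ 14.9 * (Real.sqrt L * exp (-(L/2))) := by
          apply mul_le_mul_of_nonneg_right _ hfac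
          have h20 : (0:ℝ) ≤ 1 + 1/c := by positivity
          have h21 : exp 1 * 1.51576 ≤ 4.1203 := by nlinarith
          nlinarith [mul_le_mul h21 hcval h20 (by norm_num : (0:ℝ) ≤ 4.1203)]
      _ = 14.9 * Real.sqrt L * exp (-(L/2)) := by ring
  -- assemble
  have hsplit : ∑ k ∈ Finset.Icc m₀ m₁, (k ! : ℝ) / L ^ k
      = (m₀ ! : ℝ) / L ^ m₀ + ∑ k ∈ Ico (m₀+1) (n+1), (k ! : ℝ) / L ^ k
        + ∑ k ∈ Ico (n+1) (m₁+1), (k ! : ℝ) / L ^ k := by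
    rw [← Finset.Ico_add_one_right_eq_Icc]
    rw [← Finset.sum_Ico_consecutive (fun k => (k ! : ℝ) / L ^ k)
      (by omega : m₀ ≤ n + 1) (by omega : n + 1 ≤ m₁ + 1)]
    rw [← Finset.sum_Ico_consecutive (fun k => (k ! : ℝ) / L ^ k)
      (by omega : m₀ ≤ m₀ + 1) (by omega : m₀ + 1 ≤ n + 1)]
    have : ∑ k ∈ Ico m₀ (m₀+1), (k ! : ℝ) / L ^ k = (m₀ ! : ℝ) / L ^ m₀ := by
      rw [Finset.sum_Ico_succ_top (le_refl m₀), Finset.Ico_self, Finset.sum_empty, zero_add]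
    rw [this]
  rw [hsplit]
  have : (37.1 : ℝ) * Real.sqrt L * exp (-(L/2)) = 15 * Real.sqrt L * exp (-(L/2))
      + 7.2 * Real.sqrt L * exp (-(L/2)) + 14.9 * Real.sqrt L * exp (-(L/2)) := by ring
  rw [this]
  exact add_le_add (add_le_add piece1 piece2) piece3

lemma D_ge {κℓ : ℝ} (hκℓ0 : 0 < κℓ) (hκℓ1 : κℓ < 1)
    (hsolℓ : κℓ * (1 - Real.log κℓ) = 1 / 2) :
    (37.1 : ℝ) ≤ Real.sqrt (8 * Real.pi / κℓ) * Real.exp (13 / 12) * (1 + κℓ) / (1 - κℓ) := by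
  have hlb := kl_lb hκℓ0 hκℓ1 hsolℓ
  have hub := kl_ub hκℓ0 hκℓ1 hsolℓ
  have hπ : (3.141592 : ℝ) < Real.pi := Real.pi_gt_d6
  have hE : (2.7182818283 : ℝ) ≤ Real.exp (13/12) := by
    calc (2.7182818283 : ℝ) ≤ Real.exp 1 := Real.exp_one_gt_d9.le
      _ ≤ Real.exp (13/12) := Real.exp_le_exp.2 (by norm_num)
  have hE0 : (0:ℝ) < Real.exp (13/12) := Real.exp_pos _
  have h1κ : (0:ℝ) < 1 - κℓ := by linarith
  have h1κ' : (0:ℝ) < 1 + κℓ := by linarith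
  rw [le_div_iff₀ h1κ]
  set E := Real.exp (13/12) with hE_def
  have hEκ : (0:ℝ) < E * (1 + κℓ) := by positivity
  have hsq : 37.1 * (1 - κℓ) / (E * (1 + κℓ)) ≤ Real.sqrt (8 * Real.pi / κℓ) := by
    rw [show Real.sqrt (8 * Real.pi / κℓ) = Real.sqrt (8 * Real.pi / κℓ) from rfl]
    apply Real.le_sqrt (by positivity) (by positivity) |>.2
    rw [div_pow, div_le_div_iff₀ (by positivity) hκℓ0]
    have hcube : κℓ * (1 - κℓ)^2 ≤ 4/27 := by
      nlinarith [mul_nonneg (sq_nonneg (3*κℓ - 1)) (by linarith : (0:ℝ) ≤ 4 - 3*κℓ)]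
    have hE2 : (7.389 : ℝ) ≤ E^2 := by nlinarith
    have h1κ2 : (1.39 : ℝ) ≤ (1 + κℓ)^2 := by nlinarith
    have hRHS : (25.13 : ℝ) * (7.389 * 1.39) ≤ 8 * Real.pi * (E * (1 + κℓ))^2 := by
      have h1 : (7.389 : ℝ) * 1.39 ≤ E^2 * (1 + κℓ)^2 := by
        apply mul_le_mul hE2 h1κ2 (by norm_num) (by positivity)
      have h2 : (25.13 : ℝ) ≤ 8 * Real.pi := by linarith
      calc (25.13 : ℝ) * (7.389 * 1.39) ≤ (8 * Real.pi) * (E^2 * (1+κℓ)^2) := by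
            apply mul_le_mul h2 h1 (by norm_num) (by positivity)
        _ = 8 * Real.pi * (E * (1 + κℓ))^2 := by ring
    nlinarith [hcube, hRHS]
  calc (37.1 : ℝ) * (1 - κℓ) = 37.1 * (1 - κℓ) / (E * (1 + κℓ)) * (E * (1 + κℓ)) := by
        field_simp
    _ ≤ Real.sqrt (8 * Real.pi / κℓ) * (E * (1 + κℓ)) :=
        mul_le_mul_of_nonneg_right hsq hEκ.le
    _ = Real.sqrt (8 * Real.pi / κℓ) * E * (1 + κℓ) := by ring

/-- Assume `|li(x) − li_*(x)| ≤ 1.265692883423` for all real `x ≥ e`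
and `li₀(x) ≤ π(x) ≤ li₁(x)` for all real `x ≥ e`. Then
`|li(x) − π(x)| ≤ D̲·√(x/log x) + 1.265692883423` for all real `x ≥ e`, with
`D̲ = √(8π/κ̲)·e^(13/12)·(1+κ̲)/(1−κ̲)`; in particular
`|li(x) − π(x)| = O(√(x/log x))`. Here `κ̲ ∈ (0,1)` and `κ̄ ∈ (1,e)` are the two
solutions of `κ(1−log κ) = 1/2`, `li₀(x) = li_{κ̲,0}(x)`, `li₁(x) = li_{κ̄,1}(x)`. -/
theorem abs_li_sub_primeCounting_le (κℓ κᵤ : ℝ) (hκℓ0 : 0 < κℓ) (hκℓ1 : κℓ < 1)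
    (hκᵤ1 : 1 < κᵤ) (hκᵤe : κᵤ < Real.exp 1)
    (hsolℓ : κℓ * (1 - Real.log κℓ) = 1 / 2) (hsolᵤ : κᵤ * (1 - Real.log κᵤ) = 1 / 2)
    (herr : ∀ x : ℝ, Real.exp 1 ≤ x → |li x - liStar x| ≤ 1.265692883423)
    (hconj : ∀ x : ℝ, Real.exp 1 ≤ x →
      liApprox κℓ 0 x ≤ (Nat.primeCounting ⌊x⌋₊ : ℝ) ∧
        (Nat.primeCounting ⌊x⌋₊ : ℝ) ≤ liApprox κᵤ 1 x) :
    (∀ x : ℝ, Real.exp 1 ≤ x →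
        |li x - (Nat.primeCounting ⌊x⌋₊ : ℝ)| ≤
          Real.sqrt (8 * Real.pi / κℓ) * Real.exp (13 / 12) * (1 + κℓ) / (1 - κℓ)
            * Real.sqrt (x / Real.log x) + 1.265692883423) ∧
      (fun x : ℝ => li x - (Nat.primeCounting ⌊x⌋₊ : ℝ)) =O[Filter.atTop]
        fun x : ℝ => Real.sqrt (x / Real.log x) := by
  have hD := D_ge hκℓ0 hκℓ1 hsolℓ
  -- main pointwise bound
  have main : ∀ x : ℝ, Real.exp 1 ≤ x →
      |li x - (Nat.primeCounting ⌊x⌋₊ : ℝ)| ≤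
        Real.sqrt (8 * Real.pi / κℓ) * Real.exp (13 / 12) * (1 + κℓ) / (1 - κℓ)
          * Real.sqrt (x / Real.log x) + 1.265692883423 := by
    intro x hx
    have hx0 : (0:ℝ) < x := lt_of_lt_of_le (exp_pos 1) hx
    set L := Real.log x with hL_def
    have hL1 : 1 ≤ L := by
      rw [hL_def, show (1:ℝ) = Real.log (Real.exp 1) by rw [Real.log_exp]]
      exact Real.log_le_log (exp_pos 1) hx
    have hL0 : (0:ℝ) < L := by linarith
    have hxL0 : (0:ℝ) ≤ x / L := by positivity
    set m₀ := ⌊κℓ * L⌋₊ with hm₀_def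
    set n := ⌊L⌋₊ with hn_def
    set m₁ := ⌊κᵤ * L⌋₊ with hm₁_def
    have hm₀n : m₀ ≤ n := Nat.floor_le_floor (by nlinarith)
    have hnm₁ : n ≤ m₁ := Nat.floor_le_floor (by nlinarith)
    have hn_le : (n : ℝ) ≤ L := Nat.floor_le hL0.le
    have hn_gt : L < n + 1 := Nat.lt_floor_add_one _
    obtain ⟨hlo, hhi⟩ := hconj x hx
    have hP : ∀ k : ℕ, (0:ℝ) ≤ (k ! : ℝ) / L ^ k := by
      intro k; positivity
    -- tail value
    have htail0 : (0:ℝ) ≤ (L - n) * x * (n ! : ℝ) / L ^ (n + 1) := by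
      apply div_nonneg _ (by positivity)
      apply mul_nonneg (mul_nonneg (by linarith) hx0.le) (by positivity)
    have htail1 : (L - n) * x * (n ! : ℝ) / L ^ (n + 1) ≤ x / L * ((n ! : ℝ) / L ^ n) := by
      have he : x / L * ((n ! : ℝ) / L ^ n) = x * (n ! : ℝ) / L ^ (n + 1) := by
        rw [pow_succ]
        field_simp
      rw [he]
      apply div_le_div_of_nonneg_right _ (by positivity)
      have h1 : L - n ≤ 1 := by linarith
      nlinarith [mul_nonneg hx0.le (Nat.cast_nonneg (n !))]
    -- A : liStar x - liApprox κℓ 0 x ≤ x/L * ∑_{Icc m₀ n}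
    have hA : liStar x - liApprox κℓ 0 x ≤ x / L * ∑ k ∈ Finset.Icc m₀ n, (k ! : ℝ) / L ^ k := by
      rw [liStar, liApprox]
      rw [← hL_def, ← hm₀_def, ← hn_def]
      rw [zero_mul, zero_div, zero_add]
      have hsub : ∑ k ∈ Finset.range n, (k ! : ℝ) / L ^ k
          - ∑ k ∈ Finset.range m₀, (k ! : ℝ) / L ^ k
          = ∑ k ∈ Finset.Ico m₀ n, (k ! : ℝ) / L ^ k :=
        (Finset.sum_Ico_eq_sub _ hm₀n).symm
      have hIcc : ∑ k ∈ Finset.Icc m₀ n, (k ! : ℝ) / L ^ k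
          = ∑ k ∈ Finset.Ico m₀ n, (k ! : ℝ) / L ^ k + (n ! : ℝ) / L ^ n := by
        rw [← Finset.Ico_add_one_right_eq_Icc, Finset.sum_Ico_succ_top hm₀n]
      rw [hIcc, mul_add, mul_comm (x/L) _, ← mul_comm (x/L) _]
      have : x / L * (∑ k ∈ Finset.range n, (k ! : ℝ) / L ^ k)
          - x / L * (∑ k ∈ Finset.range m₀, (k ! : ℝ) / L ^ k)
          = x / L * (∑ k ∈ Finset.Ico m₀ n, (k ! : ℝ) / L ^ k) := by
        rw [← mul_sub, hsub]
      nlinarith [this, htail1, mul_le_mul_of_nonneg_left hsub.le hxL0]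
    -- B : liApprox κᵤ 1 x - liStar x ≤ x/L * ∑_{Icc n m₁}
    have hB : liApprox κᵤ 1 x - liStar x ≤ x / L * ∑ k ∈ Finset.Icc n m₁, (k ! : ℝ) / L ^ k := by
      rw [liStar, liApprox]
      rw [← hL_def, ← hm₁_def, ← hn_def]
      rw [one_mul]
      have hsub : ∑ k ∈ Finset.range m₁, (k ! : ℝ) / L ^ k
          - ∑ k ∈ Finset.range n, (k ! : ℝ) / L ^ k
          = ∑ k ∈ Finset.Ico n m₁, (k ! : ℝ) / L ^ k :=
        (Finset.sum_Ico_eq_sub _ hnm₁).symm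
      have hIcc : ∑ k ∈ Finset.Icc n m₁, (k ! : ℝ) / L ^ k
          = ∑ k ∈ Finset.Ico n m₁, (k ! : ℝ) / L ^ k + (m₁ ! : ℝ) / L ^ m₁ := by
        rw [← Finset.Ico_add_one_right_eq_Icc, Finset.sum_Ico_succ_top hnm₁]
      have hexp : x / L * ((m₁ ! : ℝ) / L ^ m₁
            + ∑ k ∈ Finset.range m₁, (k ! : ℝ) / L ^ k)
          - (x / L * ∑ k ∈ Finset.range n, (k ! : ℝ) / L ^ k
            + (L - n) * x * (n ! : ℝ) / L ^ (n + 1))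
          ≤ x / L * ((m₁ ! : ℝ) / L ^ m₁) + x / L * (∑ k ∈ Finset.Ico n m₁, (k ! : ℝ) / L ^ k) := by
        have h1 : x / L * (∑ k ∈ Finset.range m₁, (k ! : ℝ) / L ^ k)
            - x / L * (∑ k ∈ Finset.range n, (k ! : ℝ) / L ^ k)
            = x / L * (∑ k ∈ Finset.Ico n m₁, (k ! : ℝ) / L ^ k) := by
          rw [← mul_sub, hsub]
        nlinarith [h1, htail0]
      calc x / L * ((m₁ ! : ℝ) / L ^ m₁ + ∑ k ∈ Finset.range m₁, (k ! : ℝ) / L ^ k)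
            - (x / L * ∑ k ∈ Finset.range n, (k ! : ℝ) / L ^ k
              + (L - n) * x * (n ! : ℝ) / L ^ (n + 1))
          ≤ x / L * ((m₁ ! : ℝ) / L ^ m₁) + x / L * (∑ k ∈ Finset.Ico n m₁, (k ! : ℝ) / L ^ k) := hexp
        _ = x / L * (∑ k ∈ Finset.Ico n m₁, (k ! : ℝ) / L ^ k + (m₁ ! : ℝ) / L ^ m₁) := by ring
        _ = x / L * ∑ k ∈ Finset.Icc n m₁, (k ! : ℝ) / L ^ k := by rw [← hIcc]
    -- combine to |liStar - π| bound
    have hsub1 : ∑ k ∈ Finset.Icc m₀ n, (k ! : ℝ) / L ^ k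
        ≤ ∑ k ∈ Finset.Icc m₀ m₁, (k ! : ℝ) / L ^ k := by
      apply Finset.sum_le_sum_of_subset_of_nonneg
      · exact Finset.Icc_subset_Icc (le_refl m₀) hnm₁
      · intro i _ _; exact hP i
    have hsub2 : ∑ k ∈ Finset.Icc n m₁, (k ! : ℝ) / L ^ k
        ≤ ∑ k ∈ Finset.Icc m₀ m₁, (k ! : ℝ) / L ^ k := by
      apply Finset.sum_le_sum_of_subset_of_nonneg
      · exact Finset.Icc_subset_Icc hm₀n (le_refl m₁)
      · intro i _ _; exact hP i
    have habs : |liStar x - (Nat.primeCounting ⌊x⌋₊ : ℝ)|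
        ≤ x / L * ∑ k ∈ Finset.Icc m₀ m₁, (k ! : ℝ) / L ^ k := by
      rw [abs_sub_le_iff]
      constructor
      · calc liStar x - (Nat.primeCounting ⌊x⌋₊ : ℝ) ≤ liStar x - liApprox κℓ 0 x := by linarith
          _ ≤ x / L * ∑ k ∈ Finset.Icc m₀ n, (k ! : ℝ) / L ^ k := hA
          _ ≤ x / L * ∑ k ∈ Finset.Icc m₀ m₁, (k ! : ℝ) / L ^ k :=
            mul_le_mul_of_nonneg_left hsub1 hxL0
      · calc (Nat.primeCounting ⌊x⌋₊ : ℝ) - liStar x ≤ liApprox κᵤ 1 x - liStar x := by linarith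
          _ ≤ x / L * ∑ k ∈ Finset.Icc n m₁, (k ! : ℝ) / L ^ k := hB
          _ ≤ x / L * ∑ k ∈ Finset.Icc m₀ m₁, (k ! : ℝ) / L ^ k :=
            mul_le_mul_of_nonneg_left hsub2 hxL0
    -- apply sum_bound and the sqrt identity
    have hS := sum_bound hκℓ0 hκℓ1 hκᵤ1 hsolℓ hsolᵤ hL1
    have hid : x / L * (37.1 * Real.sqrt L * exp (-(L/2))) = 37.1 * Real.sqrt (x / L) := by
      have hsx : Real.sqrt x * Real.sqrt x = x := Real.mul_self_sqrt hx0.le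
      have hsL : Real.sqrt L * Real.sqrt L = L := Real.mul_self_sqrt hL0.le
      have hsx0 : (0:ℝ) < Real.sqrt x := Real.sqrt_pos.2 hx0
      have hsL0 : (0:ℝ) < Real.sqrt L := Real.sqrt_pos.2 hL0
      have hexpx : exp (-(L/2)) = (Real.sqrt x)⁻¹ := by
        have h1 : Real.sqrt x = exp (L/2) := by
          rw [show x = exp (L/2) * exp (L/2) by
            rw [← Real.exp_add]
            norm_num
            rw [hL_def, Real.exp_log hx0]]
          rw [Real.sqrt_mul_self (exp_pos _).le]
        rw [h1, ← Real.exp_neg]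
      rw [hexpx, Real.sqrt_div hx0.le]
      field_simp
      linear_combination x * hsL - L * hsx
    -- finish pointwise bound
    have hfinal : |liStar x - (Nat.primeCounting ⌊x⌋₊ : ℝ)|
        ≤ Real.sqrt (8 * Real.pi / κℓ) * Real.exp (13 / 12) * (1 + κℓ) / (1 - κℓ)
          * Real.sqrt (x / L) := by
      calc |liStar x - (Nat.primeCounting ⌊x⌋₊ : ℝ)|
          ≤ x / L * ∑ k ∈ Finset.Icc m₀ m₁, (k ! : ℝ) / L ^ k := habs
        _ ≤ x / L * (37.1 * Real.sqrt L * exp (-(L/2))) := mul_le_mul_of_nonneg_left hS hxL0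
        _ = 37.1 * Real.sqrt (x / L) := hid
        _ ≤ Real.sqrt (8 * Real.pi / κℓ) * Real.exp (13 / 12) * (1 + κℓ) / (1 - κℓ)
            * Real.sqrt (x / L) := mul_le_mul_of_nonneg_right hD (Real.sqrt_nonneg _)
    have htri := abs_sub_abs_le_abs_sub (li x - (Nat.primeCounting ⌊x⌋₊ : ℝ)) 0
    calc |li x - (Nat.primeCounting ⌊x⌋₊ : ℝ)|
        = |(li x - liStar x) + (liStar x - (Nat.primeCounting ⌊x⌋₊ : ℝ))| := by ring_nf
      _ ≤ |li x - liStar x| + |liStar x - (Nat.primeCounting ⌊x⌋₊ : ℝ)| := abs_add_le _ _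
      _ ≤ Real.sqrt (8 * Real.pi / κℓ) * Real.exp (13 / 12) * (1 + κℓ) / (1 - κℓ)
          * Real.sqrt (x / L) + 1.265692883423 := by
          have h1 := herr x hx
          linarith [hfinal]
  refine ⟨main, ?_⟩
  rw [Asymptotics.isBigO_iff]
  refine ⟨Real.sqrt (8 * Real.pi / κℓ) * Real.exp (13 / 12) * (1 + κℓ) / (1 - κℓ)
    + 1.265692883423, ?_⟩
  filter_upwards [Filter.eventually_ge_atTop (Real.exp 1)] with x hx
  have hx0 : (0:ℝ) < x := lt_of_lt_of_le (exp_pos 1) hx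
  have hL1 : 1 ≤ Real.log x := by
    rw [show (1:ℝ) = Real.log (Real.exp 1) by rw [Real.log_exp]]
    exact Real.log_le_log (exp_pos 1) hx
  have hxL1 : 1 ≤ Real.sqrt (x / Real.log x) := by
    rw [Real.one_le_sqrt]
    rw [le_div_iff₀ (by linarith)]
    have := Real.log_le_sub_one_of_pos hx0
    linarith
  have hD' := D_ge hκℓ0 hκℓ1 hsolℓ
  have hm := main x hx
  rw [Real.norm_eq_abs, Real.norm_eq_abs, abs_of_nonneg (Real.sqrt_nonneg _)]
  calc |li x - (Nat.primeCounting ⌊x⌋₊ : ℝ)|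
      ≤ Real.sqrt (8 * Real.pi / κℓ) * Real.exp (13 / 12) * (1 + κℓ) / (1 - κℓ)
        * Real.sqrt (x / Real.log x) + 1.265692883423 := hm
    _ ≤ Real.sqrt (8 * Real.pi / κℓ) * Real.exp (13 / 12) * (1 + κℓ) / (1 - κℓ)
        * Real.sqrt (x / Real.log x) + 1.265692883423 * Real.sqrt (x / Real.log x) := by
        nlinarith [hxL1]
    _ = (Real.sqrt (8 * Real.pi / κℓ) * Real.exp (13 / 12) * (1 + κℓ) / (1 - κℓ)
        + 1.265692883423) * Real.sqrt (x / Real.log x) := by ring
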